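/- Two Gauss codes w and w' on n letters are orientedly equivalent if and only if proj^LP(w') = (shift^LP)^k(proj^LP(w)) for some integer k ≥ 0. -/

import Mathlib

/-- A Gauss code on `n` letters: a bijection from the `2*n` positions to
letters paired with a side (`false` = L, `true` = R). -/
abbrev GaussCode (n : ℕ) := Fin (2 * n) ≃ Fin n × Bool

instance (n : ℕ) [NeZero n] : NeZero (2 * n) := ⟨by have := NeZero.ne n; omega⟩

namespace GaussCode

variable {n : ℕ}

/-- `π_*(w)`: relabel the letters by the permutation `π`. -/
def permAct (π : Equiv.Perm (Fin n)) (w : GaussCode n) : GaussCode n :=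
  w.trans (π.prodCongr (Equiv.refl Bool))

/-- `shift[m](w)`: the code whose entry at position `i` is the entry of `w` at
position `i + m` (mod `2n`). -/
def shift [NeZero n] (m : ℕ) (w : GaussCode n) : GaussCode n :=
  (Equiv.addRight (Fin.ofNat (2 * n) m)).trans w

/-- `rev(w)`: the code whose entry at position `i` is the entry of `w` at
position `2n - 1 - i`. -/
def rev (w : GaussCode n) : GaussCode n :=
  (Fin.revPerm).trans w

/-- A Gauss code is left preferred if its `L`-entries appear in the order
`(1,L), (2,L), …, (n,L)` and its entry at position `0` is `(1,L)`. -/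
def IsLeftPreferred [NeZero n] (w : GaussCode n) : Prop :=
  StrictMono (fun j : Fin n => w.symm (j, false)) ∧ w 0 = (0, false)

/-- `proj^LP(w)`: relabel letters in the order of appearance of their `L`-entries,
then rotate so that `(1,L)` is at position `0`. -/
def projLP [NeZero n] (w : GaussCode n) : GaussCode n :=
  let π : Equiv.Perm (Fin n) := (Tuple.sort (fun j : Fin n => w.symm (j, false)))⁻¹
  let w' := permAct π w
  shift ((w'.symm ((0 : Fin n), false)).val) w'

/-- `shift^LP(w) := proj^LP(shift[1](w))`. -/
def shiftLP [NeZero n] (w : GaussCode n) : GaussCode n :=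
  projLP (shift 1 w)

/-- `rev^LP(w) := proj^LP(rev(w))`. -/
def revLP [NeZero n] (w : GaussCode n) : GaussCode n :=
  projLP (rev w)

/-- The value of an entry in the order `(1,L) < (1,R) < (2,L) < (2,R) < …`. -/
def entryKey (e : Fin n × Bool) : ℕ :=
  2 * e.1.val + (if e.2 then 1 else 0)

/-- Lexicographic (strict) order on Gauss codes, comparing entries position by
position in the order `(1,L) < (1,R) < (2,L) < (2,R) < …`. -/
def lexLt (w w' : GaussCode n) : Prop :=
  ∃ i : Fin (2 * n), (∀ k, k < i → w k = w' k) ∧ entryKey (w i) < entryKey (w' i)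

/-- Lexicographic order on Gauss codes. -/
def lexLe (w w' : GaussCode n) : Prop :=
  w = w' ∨ lexLt w w'

/-- A left preferred Gauss code is left canonical if it is the smallest element
of its `shift^LP`-orbit `{w, shift^LP(w), …, (shift^LP)^{n-1}(w)}`. -/
def IsLeftCanonical [NeZero n] (w : GaussCode n) : Prop :=
  IsLeftPreferred w ∧ ∀ k < n, lexLe w (shiftLP^[k] w)

/-- `proj^LC(w)`: the smallest element of the `shift^LP`-orbit of `proj^LP(w)`. -/
noncomputable def projLC [NeZero n] (w : GaussCode n) : GaussCode n :=
  letI := Classical.propDecidable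
  if h : ∃ v : GaussCode n, (∃ k < n, v = shiftLP^[k] (projLP w)) ∧
      ∀ k < n, lexLe v (shiftLP^[k] (projLP w))
  then h.choose else projLP w

/-- `rev^LC(w) := proj^LC(rev(w))`. -/
noncomputable def revLC [NeZero n] (w : GaussCode n) : GaussCode n :=
  projLC (rev w)

/-- Oriented equivalence of Gauss codes: `w' = shift[m](π_*(w))` for some
permutation `π` and integer `m`. -/
def OrientedEquiv [NeZero n] (w w' : GaussCode n) : Prop :=
  ∃ (π : Equiv.Perm (Fin n)) (m : ℕ), w' = shift m (permAct π w)

/-- Unoriented equivalence: `w` is orientedly equivalent to `w'` or to `rev(w')`. -/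
def UnorientedEquiv [NeZero n] (w w' : GaussCode n) : Prop :=
  OrientedEquiv w w' ∨ OrientedEquiv w (rev w')

/-- A Gauss code is 1-reducible if two cyclically adjacent entries share the same letter. -/
def OneReducible [NeZero n] (w : GaussCode n) : Prop :=
  ∃ i : Fin (2 * n), (w i).1 = (w (i + 1)).1

/-- A Gauss code is 2-reducible (cyclically, with `L = false`, `R = true`). -/
def TwoReducible [NeZero n] (w : GaussCode n) : Prop :=
  ∃ (i i' : Fin (2 * n)) (j k : Fin n), j ≠ k ∧
    ((w i = (j, false) ∧ w (i + 1) = (k, true) ∧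
        w i' = (j, true) ∧ w (i' + 1) = (k, false)) ∨
     (w i = (j, false) ∧ w (i + 1) = (k, true) ∧
        w i' = (k, false) ∧ w (i' + 1) = (j, true)) ∨
     (w i = (j, true) ∧ w (i + 1) = (k, false) ∧
        w i' = (k, true) ∧ w (i' + 1) = (j, false)))

/-- A Gauss code is minimal if it is neither 1-reducible nor 2-reducible. -/
def IsMinimal [NeZero n] (w : GaussCode n) : Prop :=
  ¬ OneReducible w ∧ ¬ TwoReducible w

/-- `σ_w`: the involution of positions sending each position to the unique other
position carrying the same letter. -/
def sigmaMap (w : GaussCode n) : Fin (2 * n) → Fin (2 * n) :=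
  fun i => w.symm ((w i).1, !(w i).2)

/-- `h_w`: the side (`false` = L, `true` = R) of the entry at each position. -/
def hMap (w : GaussCode n) : Fin (2 * n) → Bool :=
  fun i => (w i).2

end GaussCode
namespace GaussCode

open Fin.NatCast

variable {n : ℕ} [NeZero n]

set_option linter.unusedSectionVars false

lemma shift_shift (a b : ℕ) (w : GaussCode n) :
    shift a (shift b w) = shift (a + b) w := by
  apply Equiv.ext; intro i
  show w (i + (a : Fin (2*n)) + (b : Fin (2*n))) = w (i + ((a + b : ℕ) : Fin (2*n)))
  rw [Nat.cast_add, add_assoc]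

lemma shift_zero (w : GaussCode n) : shift 0 w = w := by
  apply Equiv.ext; intro i
  show w (i + ((0:ℕ) : Fin (2*n))) = w i
  simp

lemma shift_cast {a b : ℕ} (h : (a : Fin (2*n)) = (b : Fin (2*n))) (w : GaussCode n) :
    shift a w = shift b w := by
  unfold shift; rw [show Fin.ofNat (2 * n) a = Fin.ofNat (2 * n) b from h]

lemma permAct_one (w : GaussCode n) : permAct 1 w = w := by
  apply Equiv.ext; intro i
  show (((1 : Equiv.Perm (Fin n)) (w i).1), (w i).2) = w i
  simp

lemma permAct_permAct (π π' : Equiv.Perm (Fin n)) (w : GaussCode n) :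
    permAct π' (permAct π w) = permAct (π.trans π') w := rfl

lemma shift_permAct (m : ℕ) (π : Equiv.Perm (Fin n)) (w : GaussCode n) :
    shift m (permAct π w) = permAct π (shift m w) := rfl

lemma permAct_apply (π : Equiv.Perm (Fin n)) (w : GaussCode n) (i : Fin (2*n)) :
    permAct π w i = (π (w i).1, (w i).2) := rfl

lemma permAct_symm_apply (π : Equiv.Perm (Fin n)) (w : GaussCode n) (j : Fin n) (b : Bool) :
    (permAct π w).symm (j, b) = w.symm (π⁻¹ j, b) := rfl

lemma shift_symm_apply (m : ℕ) (w : GaussCode n) (y : Fin n × Bool) :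
    (shift m w).symm y = w.symm y - (m : Fin (2*n)) := by
  show (Equiv.addRight ((m : Fin (2*n)))).symm (w.symm y) = _
  simp [Equiv.addRight_symm, sub_eq_add_neg]

/-- Unfolded form of `projLP`. -/
lemma projLP_def (w : GaussCode n) :
    projLP w =
      shift (((permAct (Tuple.sort (fun j : Fin n => w.symm (j, false)))⁻¹ w).symm
          ((0 : Fin n), false)).val)
        (permAct (Tuple.sort (fun j : Fin n => w.symm (j, false)))⁻¹ w) := rfl

lemma sort_unique {α : Type*} [LinearOrder α] {g : Fin n → α} (hg : Function.Injective g)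
    {σ : Equiv.Perm (Fin n)} (h : Monotone (g ∘ ⇑σ)) : σ = Tuple.sort g := by
  have := Tuple.unique_monotone h (Tuple.monotone_sort g)
  exact Equiv.ext fun i => hg (congrFun this i)

lemma symm_left_injective (w : GaussCode n) :
    Function.Injective (fun j : Fin n => w.symm (j, false)) := by
  intro a b h
  simpa using congrArg (fun y => (w y).1) h

/-- `projLP` is invariant under relabeling. -/
lemma projLP_permAct (π : Equiv.Perm (Fin n)) (w : GaussCode n) :
    projLP (permAct π w) = projLP w := by
  set g : Fin n → Fin (2*n) := fun j => w.symm (j, false) with hgdef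
  have hginj : Function.Injective g := symm_left_injective w
  have hgv : (fun j : Fin n => (permAct π w).symm (j, false)) = g ∘ ⇑π⁻¹ := by
    funext j; exact permAct_symm_apply π w j false
  have hsort : Tuple.sort (fun j : Fin n => (permAct π w).symm (j, false))
      = (Tuple.sort g).trans π := by
    rw [hgv]
    refine (sort_unique (hginj.comp π⁻¹.injective) ?_).symm
    have heq : (g ∘ ⇑π⁻¹) ∘ ⇑((Tuple.sort g).trans π) = g ∘ ⇑(Tuple.sort g) := by
      funext x; simp
    rw [heq]
    exact Tuple.monotone_sort g
  have key : permAct (Tuple.sort (fun j : Fin n => (permAct π w).symm (j, false)))⁻¹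
        (permAct π w) = permAct (Tuple.sort g)⁻¹ w := by
    rw [hsort, permAct_permAct]
    congr 1
    ext x
    simp [Equiv.Perm.inv_def, Equiv.symm_trans_apply]
  rw [projLP_def, projLP_def, key]

lemma val_sub_one {N : ℕ} [NeZero N] (hN : 1 < N) (x : Fin N) (hx : x ≠ 0) :
    (x - 1).val = x.val - 1 := by
  have h1 : ((1 : Fin N) : ℕ) = 1 := by
    rw [Fin.val_one', Nat.mod_eq_of_lt hN]
  have hx' : 0 < x.val := by
    rcases Nat.eq_zero_or_pos x.val with h | h
    · exact absurd (Fin.ext (by simp [h])) hx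
    · exact h
  have hsub : (x - 1).val = (N - (1 : Fin N).val + x.val) % N := by
    rw [Fin.sub_def]
  rw [hsub, h1]
  have hx2 : x.val < N := x.isLt
  have : N - 1 + x.val = (x.val - 1) + N := by omega
  rw [this, Nat.add_mod_right, Nat.mod_eq_of_lt (by omega)]

lemma two_n_pos : 1 < 2 * n := by have := NeZero.ne n; omega

/-- R-step: shifting past an `R` entry does not change `projLP`. -/
lemma projLP_shift_one_R {w : GaussCode n} (h : (w 0).2 = true) :
    projLP (shift 1 w) = projLP w := by
  set g : Fin n → Fin (2*n) := fun j => w.symm (j, false) with hgdef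
  have hginj : Function.Injective g := symm_left_injective w
  have hne : ∀ j : Fin n, g j ≠ 0 := by
    intro j hj
    have h2 : w 0 = (j, false) := by
      have h3 : w (w.symm (j, false)) = w 0 := congrArg w hj
      rw [Equiv.apply_symm_apply] at h3
      exact h3.symm
    rw [h2] at h; simp at h
  have hgv : (fun j : Fin n => (shift 1 w).symm (j, false)) = fun j => g j - 1 := by
    funext j
    rw [shift_symm_apply, Nat.cast_one]
  have hsort : Tuple.sort (fun j : Fin n => (shift 1 w).symm (j, false)) = Tuple.sort g := by
    rw [hgv]
    refine (sort_unique ?_ ?_).symm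
    · intro a b hab
      apply hginj
      have h4 := congrArg (· + (1 : Fin (2*n))) hab
      simpa using h4
    · intro a b hab
      have hmono := Tuple.monotone_sort g hab
      simp only [Function.comp_apply] at hmono ⊢
      rw [Fin.le_def] at hmono ⊢
      rw [val_sub_one two_n_pos _ (hne _), val_sub_one two_n_pos _ (hne _)]
      omega
  set π := (Tuple.sort g)⁻¹ with hπ
  set w' := permAct π w with hw'def
  have hw'' : permAct (Tuple.sort (fun j : Fin n => (shift 1 w).symm (j, false)))⁻¹ (shift 1 w)
      = shift 1 w' := by
    rw [hsort, hw'def, hπ, ← shift_permAct]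
  have ha_ne : w'.symm ((0 : Fin n), false) ≠ 0 := by
    intro ha
    have h5 : w' 0 = ((0 : Fin n), false) := by
      rw [← ha]; exact w'.apply_symm_apply _
    have h6 : (w' 0).2 = true := h
    rw [h5] at h6; simp at h6
  rw [projLP_def, projLP_def, hw'']
  have hsymm : (shift 1 w').symm ((0 : Fin n), false) = w'.symm ((0 : Fin n), false) - 1 := by
    rw [shift_symm_apply, Nat.cast_one]
  rw [hsymm, shift_shift]
  apply shift_cast
  congr 1
  show ((w'.symm ((0 : Fin n), false)) - 1).val + 1 = (w'.symm ((0 : Fin n), false)).val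
  rw [val_sub_one two_n_pos _ ha_ne]
  have hpos : 0 < (w'.symm ((0 : Fin n), false)).val := by
    rcases Nat.eq_zero_or_pos (w'.symm ((0 : Fin n), false)).val with h0 | h0
    · exact absurd (Fin.ext (by simp [h0])) ha_ne
    · exact h0
  omega

/-- If the entry at position 0 is an `L` entry, `projLP w = permAct π w`. -/
lemma projLP_of_L {w : GaussCode n} (h : (w 0).2 = false) :
    projLP w = permAct (Tuple.sort (fun j : Fin n => w.symm (j, false)))⁻¹ w := by
  set g : Fin n → Fin (2*n) := fun j => w.symm (j, false) with hgdef
  have hginj : Function.Injective g := symm_left_injective w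
  set σ := Tuple.sort g with hσ
  have hpair : ((w 0).1, false) = w 0 := by rw [← h]
  have hval : g ((w 0).1) = 0 := by
    show w.symm ((w 0).1, false) = 0
    rw [hpair, Equiv.symm_apply_apply]
  have h0 : g (σ 0) = 0 := by
    have hle : g (σ 0) ≤ g ((w 0).1) := by
      have h7 := Tuple.monotone_sort g (Fin.zero_le (σ⁻¹ ((w 0).1)))
      simp only [Function.comp_apply, Equiv.Perm.inv_def, hσ, Equiv.apply_symm_apply] at h7
      exact h7
    rw [hval] at hle
    exact Fin.le_zero_iff'.mp hle
  have hσ0 : σ 0 = (w 0).1 := hginj (by rw [h0, hval])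
  have ha : (permAct σ⁻¹ w).symm ((0 : Fin n), false) = 0 := by
    rw [permAct_symm_apply]
    simp only [inv_inv]
    rw [hσ0, hpair, Equiv.symm_apply_apply]
  rw [projLP_def, ha]
  simpa using shift_zero (permAct σ⁻¹ w)

/-- L-step: shifting past an `L` entry corresponds to `shiftLP`. -/
lemma shiftLP_projLP_L {w : GaussCode n} (h : (w 0).2 = false) :
    shiftLP (projLP w) = projLP (shift 1 w) := by
  rw [shiftLP, projLP_of_L h, shift_permAct, projLP_permAct]

lemma exists_iterate (w : GaussCode n) (m : ℕ) :
    ∃ k, projLP (shift m w) = shiftLP^[k] (projLP w) := by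
  induction m with
  | zero => exact ⟨0, by rw [shift_zero]; rfl⟩
  | succ m ih =>
    obtain ⟨k, hk⟩ := ih
    have hs : shift (m+1) w = shift 1 (shift m w) := by
      rw [shift_shift, Nat.add_comm]
    rcases Bool.eq_false_or_eq_true ((shift m w) 0).2 with hb | hb
    · exact ⟨k, by rw [hs, projLP_shift_one_R hb, hk]⟩
    · exact ⟨k + 1, by rw [hs, ← shiftLP_projLP_L hb, hk, Function.iterate_succ_apply']⟩

lemma oe_refl (w : GaussCode n) : OrientedEquiv w w :=
  ⟨1, 0, by rw [permAct_one, shift_zero]⟩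

lemma oe_trans {w w' w'' : GaussCode n} (h : OrientedEquiv w w') (h' : OrientedEquiv w' w'') :
    OrientedEquiv w w'' := by
  obtain ⟨π, m, rfl⟩ := h
  obtain ⟨π', m', rfl⟩ := h'
  refine ⟨π.trans π', m' + m, ?_⟩
  rw [shift_permAct, shift_shift, shift_permAct, permAct_permAct, ← shift_permAct]

lemma oe_symm {w w' : GaussCode n} (h : OrientedEquiv w w') : OrientedEquiv w' w := by
  obtain ⟨π, m, rfl⟩ := h
  refine ⟨π⁻¹, 2 * n - m % (2 * n), ?_⟩
  rw [shift_permAct, shift_shift, shift_permAct, permAct_permAct]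
  have hc : ((2 * n - m % (2 * n) + m : ℕ) : Fin (2*n)) = ((0 : ℕ) : Fin (2*n)) := by
    rw [Nat.cast_zero, Fin.natCast_eq_zero]
    have hlt : m % (2 * n) < 2 * n := Nat.mod_lt _ (by have := NeZero.ne n; omega)
    obtain ⟨q, hq⟩ : ∃ q, 2 * n * q + m % (2 * n) = m :=
      ⟨m / (2 * n), Nat.div_add_mod m (2 * n)⟩
    refine ⟨q + 1, ?_⟩
    rw [Nat.mul_add, Nat.mul_one]
    generalize hP : 2 * n * q = P at hq ⊢
    omega
  rw [shift_cast hc, shift_zero]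
  have h1 : π.trans π⁻¹ = 1 := by ext x; simp
  rw [h1, permAct_one]

lemma oe_projLP (w : GaussCode n) : OrientedEquiv w (projLP w) :=
  ⟨(Tuple.sort (fun j : Fin n => w.symm (j, false)))⁻¹,
    ((permAct (Tuple.sort (fun j : Fin n => w.symm (j, false)))⁻¹ w).symm
      ((0 : Fin n), false)).val, rfl⟩

lemma oe_shift (m : ℕ) (w : GaussCode n) : OrientedEquiv w (shift m w) :=
  ⟨1, m, by rw [permAct_one]⟩

lemma oe_iterate (w : GaussCode n) (k : ℕ) :
    OrientedEquiv w (shiftLP^[k] (projLP w)) := by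
  induction k with
  | zero => exact oe_projLP w
  | succ k ih =>
    rw [Function.iterate_succ_apply']
    refine oe_trans ih ?_
    show OrientedEquiv _ (projLP (shift 1 _))
    exact oe_trans (oe_shift 1 _) (oe_projLP _)

end GaussCode
open GaussCode in
/-- two Gauss codes are orientedly equivalent iff their left preferred
projections lie in the same `shift^LP`-orbit. -/
theorem stmt6 (n : ℕ) [NeZero n] (w w' : GaussCode n) :
    OrientedEquiv w w' ↔ ∃ k : ℕ, projLP w' = shiftLP^[k] (projLP w) := by
  constructor
  · rintro ⟨π, m, rfl⟩
    rw [shift_permAct, projLP_permAct]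
    exact exists_iterate w m
  · rintro ⟨k, hk⟩
    have h1 : OrientedEquiv w (projLP w') := hk ▸ oe_iterate w k
    exact oe_trans h1 (oe_symm (oe_projLP w'))
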